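/- Let S be a finite set of artifacts, D a finite set of defects (each a nonempty subset of S), qa : S → ℝ, qf : D → [0,1), C ∈ ℝ, and p ∈ [0,1]. If H : S → {0,1} is drawn from the product of |S| independent Bernoulli(p) distributions, then the expected total cost E[ Σ_{s : H(s)=1} qa(s) + Σ_{d ∈ D_MISS(H)} C + Σ_{d ∈ D_PRED(H)} qf(d)·C ] equals Σ_{s ∈ S} p·qa(s) + Σ_{d ∈ D} (1 − p^{|d|})·C + Σ_{d ∈ D} p^{|d|}·qf(d)·C, where D_PRED(H) = {d ∈ D : ∀ s ∈ d, H(s) = 1} and D_MISS(H) = D \ D_PRED(H). (Equation (16): the expected cost of randomly applying quality assurance with probability p equals cost_random(p).) -/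

import Mathlib

open MeasureTheory Finset

lemma cylinder_measure_aux {α : Type*} [Fintype α] [DecidableEq α]
    (ν : α → Measure Bool) [∀ i, IsProbabilityMeasure (ν i)]
    (q : ENNReal) (hq : ∀ i, ν i {true} = q) (T : Finset α) :
    Measure.pi ν {H : α → Bool | ∀ s ∈ T, H s = true} = q ^ T.card := by
  have hset : {H : α → Bool | ∀ s ∈ T, H s = true}
      = Set.univ.pi (fun i => if i ∈ T then ({true} : Set Bool) else Set.univ) := by
    ext H
    simp only [Set.mem_setOf_eq, Set.mem_pi, Set.mem_univ, true_implies]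
    constructor
    · intro h i
      by_cases hi : i ∈ T <;> simp [hi, h]
    · intro h s hs
      have := h s
      simpa [hs] using this
  rw [hset, Measure.pi_pi]
  have : ∀ i, ν i (if i ∈ T then ({true} : Set Bool) else Set.univ)
      = if i ∈ T then q else 1 := by
    intro i; by_cases hi : i ∈ T <;> simp only [hi, if_true, if_false, hq, measure_univ]
  simp_rw [this]
  rw [Finset.prod_ite_mem, Finset.univ_inter, Finset.prod_const]

/-- Equation (16): the expected cost of randomly applying quality assurance to each
artifact independently with probability `p` equals `cost_random(p)`. Here the set of
artifacts is the finite type `α`, `D` is the set of defects, and `aff d` is the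
(nonempty) set of artifacts affected by defect `d`. For a random selection
`H : α → Bool`, a defect is predicted (covered) if all its artifacts are selected,
and missed otherwise. -/
theorem expected_cost_random {α β : Type*} [Fintype α] [DecidableEq α] [DecidableEq β]
    (D : Finset β) (aff : β → Finset α) (hne : ∀ d ∈ D, (aff d).Nonempty)
    (qa : α → ℝ) (qf : β → ℝ) (hqf : ∀ d ∈ D, 0 ≤ qf d ∧ qf d < 1)
    (C : ℝ) (p : ℝ) (hp0 : 0 ≤ p) (hp1 : p ≤ 1) :
    ∫ H : α → Bool,
        ((∑ s ∈ Finset.univ.filter (fun s => H s = true), qa s)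
          + (∑ _d ∈ D \ D.filter (fun d => ∀ s ∈ aff d, H s = true), C)
          + (∑ d ∈ D.filter (fun d => ∀ s ∈ aff d, H s = true), qf d * C))
      ∂(Measure.pi (fun _ : α =>
        (PMF.bernoulli (Real.toNNReal p) (Real.toNNReal_le_one.mpr hp1)).toMeasure))
    = ∑ s : α, p * qa s + ∑ d ∈ D, (1 - p ^ (aff d).card) * C
        + ∑ d ∈ D, p ^ (aff d).card * qf d * C := by
  set ν : α → Measure Bool := fun _ =>
    (PMF.bernoulli (Real.toNNReal p) (Real.toNNReal_le_one.mpr hp1)).toMeasure with hν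
  set μ : Measure (α → Bool) := Measure.pi ν with hμ
  have hq : ∀ i : α, ν i {true} = ENNReal.ofReal p := by
    intro i
    rw [hν, PMF.toMeasure_apply_singleton _ _ (measurableSet_singleton _),
      PMF.bernoulli_apply]
    rfl
  -- measure of cylinder sets, in real form
  have hcyl : ∀ T : Finset α,
      (μ {H : α → Bool | ∀ s ∈ T, H s = true}).toReal = p ^ T.card := by
    intro T
    rw [hμ, cylinder_measure_aux ν _ hq T, ENNReal.toReal_pow, ENNReal.toReal_ofReal hp0]
  have hmeas : ∀ A : Set (α → Bool), MeasurableSet A := fun A => (Set.toFinite A).measurableSet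
  -- rewrite integrand
  have hrw : ∀ H : α → Bool,
      ((∑ s ∈ Finset.univ.filter (fun s => H s = true), qa s)
        + (∑ _d ∈ D \ D.filter (fun d => ∀ s ∈ aff d, H s = true), C)
        + (∑ d ∈ D.filter (fun d => ∀ s ∈ aff d, H s = true), qf d * C))
      = (∑ s : α, if H s = true then qa s else 0)
        + ∑ d ∈ D, (if ∀ s ∈ aff d, H s = true then qf d * C else C) := by
    intro H
    rw [Finset.sum_filter, ← Finset.filter_not, Finset.sum_filter, Finset.sum_filter, add_assoc,
      ← Finset.sum_add_distrib]
    congr 1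
    apply Finset.sum_congr rfl
    intro d _
    by_cases h : ∀ s ∈ aff d, H s = true
    · rw [if_pos h, if_pos h, if_neg (not_not_intro h), zero_add]
    · rw [if_pos h, if_neg h, if_neg h, add_zero]
  simp_rw [hrw]
  have hint : ∀ f : (α → Bool) → ℝ, Integrable f μ := fun f => .of_finite
  rw [integral_add (hint _) (hint _), integral_finset_sum _ (fun _ _ => hint _),
    integral_finset_sum _ (fun _ _ => hint _)]
  have e1 : (∑ s : α, ∫ H : α → Bool, (if H s = true then qa s else 0) ∂μ)
      = ∑ s : α, p * qa s := by
    apply Finset.sum_congr rfl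
    intro s _
    have h1 : (fun H : α → Bool => if H s = true then qa s else 0)
        = Set.indicator {H : α → Bool | ∀ t ∈ ({s} : Finset α), H t = true}
            (fun _ => qa s) := by
      funext H
      by_cases h : H s = true <;> simp [Set.indicator_apply, h]
    rw [h1, integral_indicator_const _ (hmeas _), smul_eq_mul, measureReal_def, hcyl,
      Finset.card_singleton, pow_one]
  have e2 : (∑ d ∈ D, ∫ H : α → Bool,
        (if ∀ s ∈ aff d, H s = true then qf d * C else C) ∂μ)
      = ∑ d ∈ D, ((1 - p ^ (aff d).card) * C + p ^ (aff d).card * qf d * C) := by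
    apply Finset.sum_congr rfl
    intro d _
    have h1 : (fun H : α → Bool => if ∀ s ∈ aff d, H s = true then qf d * C else C)
        = fun H => C + Set.indicator {H : α → Bool | ∀ s ∈ aff d, H s = true}
            (fun _ => qf d * C - C) H := by
      funext H
      rw [Set.indicator_apply]
      simp only [Set.mem_setOf_eq]
      by_cases h : ∀ s ∈ aff d, H s = true
      · rw [if_pos h, if_pos h]; ring
      · rw [if_neg h, if_neg h]; ring
    rw [h1, integral_add (hint _) (hint _), integral_const,
      integral_indicator_const _ (hmeas _), smul_eq_mul, smul_eq_mul, measureReal_def, measureReal_def, hcyl, measure_univ,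
      ENNReal.toReal_one]
    ring
  rw [e1, e2, Finset.sum_add_distrib, add_assoc]
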